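/- Let Φ be a completely positive map on M_N(ℂ) that is self-adjoint with respect to the KMS inner product. Then Φ is extremal in the cone CP_KMS (i.e., whenever Ψ ∈ CP_KMS and Φ − tΨ is completely positive for some t > 0, Ψ is a nonnegative scalar multiple of Φ) if and only if there exists V ∈ M_N(ℂ) with σ^{−1/2} V σ^{1/2} = V* such that Φ(A) = V* A V for all A ∈ M_N(ℂ). -/

import Mathlib

open MeasureTheory Matrix
open scoped ComplexOrder

noncomputable section

/-- The algebra of `N × N` complex matrices. -/
abbrev Mat (N : ℕ) := Matrix (Fin N) (Fin N) ℂ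

variable {N : ℕ}

/-- Real power `σ^s` of a positive definite matrix, defined via the spectral decomposition. -/
noncomputable def mpow (σ : Mat N) (hσ : σ.PosDef) (s : ℝ) : Mat N :=
  (hσ.1.eigenvectorUnitary : Mat N) *
    Matrix.diagonal (fun i => ((hσ.1.eigenvalues i ^ s : ℝ) : ℂ)) *
    star (hσ.1.eigenvectorUnitary : Mat N)

/-- Complete positivity of a linear map on `M_N(ℂ)`: existence of a Kraus representation. -/
def IsCP (Φ : Mat N →ₗ[ℂ] Mat N) : Prop :=
  ∃ (M : ℕ) (V : Fin M → Mat N), ∀ A, Φ A = ∑ j, (V j)ᴴ * A * V j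

/-- The KMS inner product `⟨B,A⟩_KMS = Tr[Bᴴ σ^{1/2} A σ^{1/2}]`. -/
def kmsInner (σ : Mat N) (hσ : σ.PosDef) (B A : Mat N) : ℂ :=
  (Bᴴ * mpow σ hσ (1/2) * A * mpow σ hσ (1/2)).trace

/-- Self-adjointness with respect to the KMS inner product. -/
def IsKMSSelfAdjoint (σ : Mat N) (hσ : σ.PosDef) (Φ : Mat N →ₗ[ℂ] Mat N) : Prop :=
  ∀ A B, kmsInner σ hσ B (Φ A) = kmsInner σ hσ (Φ B) A

namespace ExtremalAux

variable {N : ℕ}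


lemma mpow_conjTranspose (σ : Mat N) (hσ : σ.PosDef) (s : ℝ) :
    (mpow σ hσ s)ᴴ = mpow σ hσ s := by
  have hf : star (fun i => ((hσ.1.eigenvalues i ^ s : ℝ) : ℂ))
      = fun i => ((hσ.1.eigenvalues i ^ s : ℝ) : ℂ) :=
    funext fun i => Complex.conj_ofReal _
  simp only [mpow, conjTranspose_mul, Matrix.star_eq_conjTranspose,
    conjTranspose_conjTranspose, diagonal_conjTranspose, hf, mul_assoc]

lemma mpow_mul_mpow (σ : Mat N) (hσ : σ.PosDef) (s t : ℝ) :
    mpow σ hσ s * mpow σ hσ t = mpow σ hσ (s + t) := by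
  have hU : (star (hσ.1.eigenvectorUnitary : Mat N)) * (hσ.1.eigenvectorUnitary : Mat N) = 1 :=
    Unitary.coe_star_mul_self _
  simp only [mpow, mul_assoc]
  rw [← mul_assoc (star (hσ.1.eigenvectorUnitary : Mat N)), hU, one_mul,
    ← mul_assoc (Matrix.diagonal _), diagonal_mul_diagonal]
  have hd : (fun i => ((hσ.1.eigenvalues i ^ s : ℝ) : ℂ) * ((hσ.1.eigenvalues i ^ t : ℝ) : ℂ))
      = fun i => ((hσ.1.eigenvalues i ^ (s + t) : ℝ) : ℂ) := by
    funext i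
    rw [← Complex.ofReal_mul, ← Real.rpow_add (hσ.eigenvalues_pos i)]
  rw [hd]

lemma mpow_zero (σ : Mat N) (hσ : σ.PosDef) : mpow σ hσ 0 = 1 := by
  have hU : (hσ.1.eigenvectorUnitary : Mat N) * (star (hσ.1.eigenvectorUnitary : Mat N)) = 1 :=
    Unitary.coe_mul_star_self _
  simp only [mpow, Real.rpow_zero, Complex.ofReal_one, diagonal_one, mul_one, hU]



variable {N : ℕ}

/-- The Choi matrix of a linear map on `Mat N`. -/
def choi (Φ : Mat N →ₗ[ℂ] Mat N) : Matrix (Fin N × Fin N) (Fin N × Fin N) ℂ :=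
  Matrix.of fun p q => Φ (Matrix.single p.1 q.1 1) p.2 q.2

lemma choi_apply (Φ : Mat N →ₗ[ℂ] Mat N) (i k j l : Fin N) :
    choi Φ (i, k) (j, l) = Φ (Matrix.single i j 1) k l := rfl

lemma map_eq_sum (Φ : Mat N →ₗ[ℂ] Mat N) (A : Mat N) :
    Φ A = ∑ i, ∑ j, A i j • Φ (Matrix.single i j 1) := by
  conv_lhs => rw [matrix_eq_sum_single A]
  rw [map_sum]
  refine Finset.sum_congr rfl fun i _ => ?_
  rw [map_sum]
  refine Finset.sum_congr rfl fun j _ => ?_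
  rw [← _root_.map_smul, smul_single, smul_eq_mul, mul_one]

lemma map_apply (Φ : Mat N →ₗ[ℂ] Mat N) (A : Mat N) (k l : Fin N) :
    Φ A k l = ∑ i, ∑ j, A i j * choi Φ (i, k) (j, l) := by
  conv_lhs => rw [map_eq_sum Φ A]
  simp [choi, Matrix.sum_apply, Matrix.smul_apply, smul_eq_mul]

lemma eq_of_choi_eq {Φ Ψ : Mat N →ₗ[ℂ] Mat N} (h : choi Φ = choi Ψ) : Φ = Ψ := by
  refine LinearMap.ext fun A => ?_
  ext k l
  rw [map_apply, map_apply, h]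

/-- The CP map determined by a family of Kraus operators. -/
def ofKraus {M : ℕ} (V : Fin M → Mat N) : Mat N →ₗ[ℂ] Mat N where
  toFun A := ∑ m, (V m)ᴴ * A * V m
  map_add' A B := by simp [mul_add, add_mul, Finset.sum_add_distrib]
  map_smul' c A := by simp [Finset.smul_sum, mul_smul_comm, smul_mul_assoc]

lemma isCP_ofKraus {M : ℕ} (V : Fin M → Mat N) : IsCP (ofKraus V) :=
  ⟨M, V, fun _ => rfl⟩

lemma choi_ofKraus {M : ℕ} (V : Fin M → Mat N) (i k j l : Fin N) :
    choi (ofKraus V) (i, k) (j, l) = ∑ m, star (V m i k) * V m j l := by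
  simp only [choi_apply, ofKraus, LinearMap.coe_mk, AddHom.coe_mk, Matrix.sum_apply]
  refine Finset.sum_congr rfl fun m _ => ?_
  simp [mul_apply, Matrix.single, conjTranspose_apply, ite_and, ite_mul, mul_ite,
    zero_mul, mul_zero, Finset.sum_ite_eq, Finset.sum_ite_eq']

lemma posSemidef_vecMulVec_star {n : Type*} [Fintype n] (x : n → ℂ) :
    (vecMulVec x (star x)).PosSemidef := by
  refine Matrix.PosSemidef.of_dotProduct_mulVec_nonneg ?_ ?_
  · ext p q
    simp [vecMulVec_apply, conjTranspose_apply, mul_comm]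
  · intro y
    have hmv : (vecMulVec x (star x)) *ᵥ y = (star x ⬝ᵥ y) • x := by
      funext p
      simp [vecMulVec_apply, mulVec, dotProduct, Finset.mul_sum, mul_assoc, mul_comm, mul_left_comm]
    rw [hmv, dotProduct_smul]
    rw [smul_eq_mul, star_dotProduct y x]
    exact mul_star_self_nonneg _

lemma posSemidef_sum {ι : Type*} (s : Finset ι) (f : ι → Matrix (Fin N × Fin N) (Fin N × Fin N) ℂ)
    (h : ∀ i ∈ s, (f i).PosSemidef) : (∑ i ∈ s, f i).PosSemidef := by
  classical
  induction s using Finset.induction_on with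
  | empty => simpa using Matrix.PosSemidef.zero
  | insert _ _ hx ih =>
    rw [Finset.sum_insert hx]
    exact (h _ (Finset.mem_insert_self _ _)).add
      (ih fun i hi => h i (Finset.mem_insert_of_mem hi))

lemma posSemidef_choi_of_isCP {Φ : Mat N →ₗ[ℂ] Mat N} (h : IsCP Φ) : (choi Φ).PosSemidef := by
  obtain ⟨M, V, hV⟩ := h
  have hΦ : Φ = ofKraus V := LinearMap.ext hV
  rw [hΦ]
  have hsum : choi (ofKraus V) = ∑ m, vecMulVec (fun p => star (V m p.1 p.2))
      (star fun p => star (V m p.1 p.2)) := by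
    ext ⟨i, k⟩ ⟨j, l⟩
    rw [choi_ofKraus, Matrix.sum_apply]
    refine Finset.sum_congr rfl fun m _ => ?_
    simp [vecMulVec_apply]
  rw [hsum]
  exact posSemidef_sum _ _ fun m _ => posSemidef_vecMulVec_star _

lemma isCP_of_posSemidef_choi {Φ : Mat N →ₗ[ℂ] Mat N} (h : (choi Φ).PosSemidef) : IsCP Φ := by
  open scoped MatrixOrder in obtain ⟨B, hB⟩ := CStarAlgebra.nonneg_iff_eq_star_mul_self.mp h.nonneg
  let e : Fin N × Fin N ≃ Fin (N * N) := finProdFinEquiv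
  let V : Fin (N * N) → Mat N := fun m => Matrix.of fun i k => B (e.symm m) (i, k)
  have hch : choi (ofKraus V) = choi Φ := by
    ext ⟨i, k⟩ ⟨j, l⟩
    have : ∑ m, star (V m i k) * V m j l = ∑ p, star (B p (i, k)) * B p (j, l) :=
      Equiv.sum_comp e.symm (fun p => star (B p (i, k)) * B p (j, l))
    rw [choi_ofKraus, this, hB]
    simp [mul_apply, conjTranspose_apply]
  have hΦ : Φ = ofKraus V := eq_of_choi_eq hch.symm
  rw [hΦ]
  exact isCP_ofKraus V

lemma choi_sub_smul (Φ Ψ : Mat N →ₗ[ℂ] Mat N) (t : ℂ) :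
    choi (Φ - t • Ψ) = choi Φ - t • choi Ψ := by
  ext ⟨i, k⟩ ⟨j, l⟩
  simp [choi]

lemma choi_smul (c : ℂ) (Φ : Mat N →ₗ[ℂ] Mat N) : choi (c • Φ) = c • choi Φ := by
  ext ⟨i, k⟩ ⟨j, l⟩
  simp [choi]


lemma vecMulVec_star_mulVec {n : Type*} [Fintype n] (x y : n → ℂ) :
    (vecMulVec x (star x)) *ᵥ y = (star x ⬝ᵥ y) • x := by
  funext p
  simp [vecMulVec_apply, mulVec, dotProduct, Finset.sum_mul, Finset.mul_sum,
    mul_assoc, mul_comm, mul_left_comm]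

lemma eq_zero_of_mulVec_single {n : Type*} [Fintype n] [DecidableEq n]
    {D : Matrix n n ℂ} (h : ∀ y, D *ᵥ y = 0) : D = 0 := by
  ext i j
  simpa using congrFun (h (Pi.single j 1)) i

lemma dominated_by_rank_one {n : Type*} [Fintype n] [DecidableEq n]
    (x : n → ℂ) {D : Matrix n n ℂ} (hD : D.PosSemidef)
    (hle : (vecMulVec x (star x) - D).PosSemidef) :
    ∃ μ : ℝ, 0 ≤ μ ∧ D = (μ : ℂ) • vecMulVec x (star x) := by
  set E := vecMulVec x (star x) with hE
  -- key step: vectors orthogonal to x are killed by D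
  have key : ∀ w : n → ℂ, star x ⬝ᵥ w = 0 → D *ᵥ w = 0 := by
    intro w hw
    apply (hD.dotProduct_mulVec_zero_iff w).mp
    have h1 : 0 ≤ star w ⬝ᵥ D *ᵥ w := hD.dotProduct_mulVec_nonneg w
    have h2 : 0 ≤ star w ⬝ᵥ (E - D) *ᵥ w := hle.dotProduct_mulVec_nonneg w
    have hEw : E *ᵥ w = 0 := by rw [hE, vecMulVec_star_mulVec, hw, zero_smul]
    rw [sub_mulVec, hEw, zero_sub, dotProduct_neg, neg_nonneg] at h2
    exact le_antisymm h2 h1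
  by_cases hx : x = 0
  · refine ⟨0, le_refl 0, ?_⟩
    have hD0 : D = 0 := by
      apply eq_zero_of_mulVec_single
      intro y
      exact key y (by rw [hx]; simp)
    rw [hD0, Complex.ofReal_zero, zero_smul]
  · -- x ≠ 0
    set s : ℂ := star x ⬝ᵥ x with hs
    have hs0 : s ≠ 0 := fun h => hx (dotProduct_star_self_eq_zero.mp h)
    have hsnn : 0 ≤ s := by
      rw [hs, Complex.nonneg_iff]
      constructor
      · simp only [dotProduct, Complex.re_sum]
        apply Finset.sum_nonneg
        intro p _
        simp [Pi.star_apply, Complex.star_def, Complex.mul_re, Complex.conj_re, Complex.conj_im]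
        nlinarith [sq_nonneg (x p).re, sq_nonneg (x p).im]
      · simp only [dotProduct, Complex.im_sum]
        rw [eq_comm]
        apply Finset.sum_eq_zero
        intro p _
        simp [Pi.star_apply, Complex.star_def, Complex.mul_im, Complex.conj_re, Complex.conj_im]
        ring
    set γ : ℂ := star x ⬝ᵥ D *ᵥ x with hγdef
    have hγnn : 0 ≤ γ := hD.dotProduct_mulVec_nonneg x
    -- D *ᵥ x = (γ / s) • x
    have hDx : D *ᵥ x = (γ / s) • x := by
      set z : n → ℂ := D *ᵥ x - (γ / s) • x with hzdef
      have hz1 : star x ⬝ᵥ z = 0 := by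
        rw [hzdef, dotProduct_sub, dotProduct_smul, smul_eq_mul, ← hγdef, ← hs,
          div_mul_cancel₀ _ hs0, sub_self]
      have hz2 : D *ᵥ z = 0 := key z hz1
      have hz3 : star z ⬝ᵥ z = 0 := by
        have e1 : star z ⬝ᵥ (D *ᵥ x) = 0 := by
          rw [dotProduct_mulVec]
          have : star z ᵥ* D = star (D *ᵥ z) := by
            rw [star_mulVec, hD.1]
          rw [this, hz2]
          simp
        have e2 : star z ⬝ᵥ x = 0 := by
          rw [star_dotProduct, hz1, star_zero]
        rw [hzdef]
        rw [show star (D *ᵥ x - (γ / s) • x) ⬝ᵥ (D *ᵥ x - (γ / s) • x)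
          = star z ⬝ᵥ (D *ᵥ x) - (γ / s) * (star z ⬝ᵥ x) from by
            rw [hzdef, dotProduct_sub, dotProduct_smul, smul_eq_mul]]
        rw [e1, e2, mul_zero, sub_zero]
      have : z = 0 := dotProduct_star_self_eq_zero.mp hz3
      rw [hzdef] at this
      linear_combination (norm := module) this
    -- conclude D = (γ / s^2) • E
    have hmain : D = (γ / s ^ 2) • E := by
      have h0 : ∀ y, (D - (γ / s ^ 2) • E) *ᵥ y = 0 := by
        intro y
        set α : ℂ := (star x ⬝ᵥ y) / s with hα
        have hw : star x ⬝ᵥ (y - α • x) = 0 := by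
          rw [dotProduct_sub, dotProduct_smul, smul_eq_mul, hα, div_mul_cancel₀ _ hs0, sub_self]
        have hDw : D *ᵥ (y - α • x) = 0 := key _ hw
        have hDy : D *ᵥ y = (α * (γ / s)) • x := by
          have e : D *ᵥ y = D *ᵥ (y - α • x) + α • (D *ᵥ x) := by
            rw [mulVec_sub, mulVec_smul, sub_add_cancel]
          rw [e, hDw, zero_add, hDx, smul_smul]
        have hEy : E *ᵥ y = (α * s) • x := by
          rw [hE, vecMulVec_star_mulVec]
          congr 1
          rw [hα, div_mul_cancel₀ _ hs0]
        have : (D - (γ / s ^ 2) • E) *ᵥ y = D *ᵥ y - (γ / s ^ 2) • (E *ᵥ y) := by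
          rw [sub_mulVec, smul_mulVec]
        rw [this, hDy, hEy, smul_smul, ← sub_smul]
        have hc : α * (γ / s) - γ / s ^ 2 * (α * s) = 0 := by
          field_simp
          ring
        rw [hc, zero_smul]
      have := eq_zero_of_mulVec_single h0
      exact (sub_eq_zero.mp this)
    have hγim : γ.im = 0 := ((Complex.nonneg_iff.mp hγnn).2).symm
    have hsim : s.im = 0 := ((Complex.nonneg_iff.mp hsnn).2).symm
    have hγre : (γ.re : ℂ) = γ := Complex.ext rfl (by simp [hγim])
    have hsre : (s.re : ℂ) = s := Complex.ext rfl (by simp [hsim])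
    refine ⟨γ.re / s.re ^ 2, ?_, ?_⟩
    · exact div_nonneg (Complex.nonneg_iff.mp hγnn).1 (sq_nonneg _)
    · rw [hmain]
      congr 1
      push_cast
      rw [hγre, hsre]


/-- Hilbert–Schmidt self-adjointness. -/
def IsHSSelfAdjoint (Φ : Mat N →ₗ[ℂ] Mat N) : Prop :=
  ∀ A B : Mat N, (Bᴴ * Φ A).trace = ((Φ B)ᴴ * A).trace

/-- The reality condition on Choi matrices corresponding to HS self-adjointness. -/
def JrealM (C : Matrix (Fin N × Fin N) (Fin N × Fin N) ℂ) : Prop :=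
  ∀ a b c d : Fin N, C (a, c) (b, d) = star (C (c, a) (d, b))

lemma trace_conjTranspose_mul (B M : Mat N) :
    (Bᴴ * M).trace = ∑ p, ∑ q, star (B q p) * M q p := by
  simp only [Matrix.trace, Matrix.diag, mul_apply, conjTranspose_apply]

lemma trace_conjTranspose_std_mul (c d : Fin N) (M : Mat N) :
    ((Matrix.single c d 1)ᴴ * M).trace = M c d := by
  rw [trace_conjTranspose_mul]
  simp [Matrix.single, apply_ite (star : ℂ → ℂ), ite_and, ite_mul, zero_mul,
    Finset.sum_ite_eq, Finset.sum_ite_eq']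

lemma trace_conjTranspose_mul_std (M : Mat N) (a b : Fin N) :
    (Mᴴ * Matrix.single a b 1).trace = star (M a b) := by
  rw [trace_conjTranspose_mul]
  simp [Matrix.single, ite_and, mul_ite, mul_zero, mul_one,
    Finset.sum_ite_eq, Finset.sum_ite_eq']

lemma sum4_rev (f : Fin N → Fin N → Fin N → Fin N → ℂ) :
    ∑ p, ∑ q, ∑ c, ∑ d, f p q c d = ∑ p, ∑ q, ∑ c, ∑ d, f d c q p := by
  let e : ((Fin N × Fin N) × Fin N × Fin N) ≃ ((Fin N × Fin N) × Fin N × Fin N) :=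
    ⟨fun z => ((z.2.2, z.2.1), (z.1.2, z.1.1)), fun z => ((z.2.2, z.2.1), (z.1.2, z.1.1)),
      fun z => rfl, fun z => rfl⟩
  have h := Fintype.sum_equiv e
    (fun z : (Fin N × Fin N) × Fin N × Fin N => f z.2.2 z.2.1 z.1.2 z.1.1)
    (fun z : (Fin N × Fin N) × Fin N × Fin N => f z.1.1 z.1.2 z.2.1 z.2.2)
    (fun z => rfl)
  calc ∑ p, ∑ q, ∑ c, ∑ d, f p q c d
      = ∑ z : (Fin N × Fin N) × Fin N × Fin N, f z.1.1 z.1.2 z.2.1 z.2.2 := by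
        simp [Fintype.sum_prod_type]
    _ = ∑ z : (Fin N × Fin N) × Fin N × Fin N, f z.2.2 z.2.1 z.1.2 z.1.1 := h.symm
    _ = ∑ p, ∑ q, ∑ c, ∑ d, f d c q p := by
        simp [Fintype.sum_prod_type]

lemma isHS_iff_Jreal (Φ : Mat N →ₗ[ℂ] Mat N) :
    IsHSSelfAdjoint Φ ↔ JrealM (choi Φ) := by
  constructor
  · intro h a b c d
    have := h (Matrix.single a b 1) (Matrix.single c d 1)
    rw [trace_conjTranspose_std_mul, trace_conjTranspose_mul_std] at this
    exact this
  · intro hJ A B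
    rw [trace_conjTranspose_mul, trace_conjTranspose_mul]
    have lhs : ∀ p q : Fin N, star (B q p) * Φ A q p
        = ∑ a, ∑ b, star (B q p) * (A a b * choi Φ (a, q) (b, p)) := by
      intro p q
      rw [map_apply Φ A q p, Finset.mul_sum]
      exact Finset.sum_congr rfl fun a _ => by rw [Finset.mul_sum]
    have rhs : ∀ p q : Fin N, star (Φ B q p) * A q p
        = ∑ c, ∑ d, star (B c d) * (A q p * choi Φ (q, c) (p, d)) := by
      intro p q
      rw [map_apply Φ B q p]
      rw [star_sum]
      rw [Finset.sum_mul]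
      refine Finset.sum_congr rfl fun c _ => ?_
      rw [star_sum, Finset.sum_mul]
      refine Finset.sum_congr rfl fun d _ => ?_
      rw [star_mul', hJ q p c d]
      ring
    simp only [lhs, rhs]
    rw [sum4_rev (fun p q c d => star (B c d) * (A q p * choi Φ (q, c) (p, d)))]

/-- The antilinear symmetry `J` on vectors. -/
def Jvec (v : Fin N × Fin N → ℂ) : Fin N × Fin N → ℂ := fun p => star (v (p.2, p.1))

lemma Jvec_Jvec (v : Fin N × Fin N → ℂ) : Jvec (Jvec v) = v := by
  funext p
  simp [Jvec]

lemma mulVec_Jvec {C : Matrix (Fin N × Fin N) (Fin N × Fin N) ℂ} (hJ : JrealM C)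
    (v : Fin N × Fin N → ℂ) : C *ᵥ (Jvec v) = Jvec (C *ᵥ v) := by
  funext ⟨i, k⟩
  show ∑ q : Fin N × Fin N, C (i, k) q * star (v (q.2, q.1))
      = star (∑ q : Fin N × Fin N, C (k, i) q * v q)
  rw [star_sum]
  calc ∑ q : Fin N × Fin N, C (i, k) q * star (v (q.2, q.1))
      = ∑ q : Fin N × Fin N, star (C (k, i) (q.2, q.1)) * star (v (q.2, q.1)) := by
        refine Finset.sum_congr rfl fun q _ => ?_
        rw [← hJ i q.1 k q.2]
    _ = ∑ q : Fin N × Fin N, star (C (k, i) q) * star (v q) :=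
        Equiv.sum_comp (Equiv.prodComm (Fin N) (Fin N))
          (fun q => star (C (k, i) q) * star (v q))
    _ = ∑ q : Fin N × Fin N, star (C (k, i) q * v q) := by
        refine Finset.sum_congr rfl fun q _ => ?_
        rw [star_mul']

lemma star_dot_self_eq {n : Type*} [Fintype n] (v : n → ℂ) :
    star v ⬝ᵥ v = ((∑ p, Complex.normSq (v p) : ℝ) : ℂ) := by
  push_cast
  refine Finset.sum_congr rfl fun p _ => ?_
  rw [Pi.star_apply, Complex.star_def, Complex.normSq_eq_conj_mul_self]

lemma normSq_sum_pos {n : Type*} [Fintype n] {v : n → ℂ} (hv : v ≠ 0) :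
    0 < ∑ p, Complex.normSq (v p) := by
  obtain ⟨p, hp⟩ := Function.ne_iff.mp hv
  exact Finset.sum_pos' (fun q _ => Complex.normSq_nonneg _)
    ⟨p, Finset.mem_univ p, Complex.normSq_pos.mpr hp⟩

lemma exists_Jreal_eigvec {C : Matrix (Fin N × Fin N) (Fin N × Fin N) ℂ}
    (hC : C.PosSemidef) (hJ : JrealM C) (hne : C ≠ 0) :
    ∃ (lam : ℝ) (u : Fin N × Fin N → ℂ),
      0 < lam ∧ u ≠ 0 ∧ Jvec u = u ∧ C *ᵥ u = (lam : ℂ) • u := by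
  obtain ⟨v, t, ht, hv, hvec⟩ := hC.1.exists_eigenvector_of_ne_zero hne
  have hvec' : C *ᵥ v = (t : ℂ) • v := by
    rw [hvec]
    funext p
    simp [Complex.real_smul]
  have htpos : 0 < t := by
    rcases ht.lt_or_gt with h | h
    · exfalso
      have h1 : 0 ≤ star v ⬝ᵥ C *ᵥ v := hC.dotProduct_mulVec_nonneg v
      rw [hvec', dotProduct_smul, smul_eq_mul, star_dot_self_eq] at h1
      have h2 : 0 < ∑ p, Complex.normSq (v p) := normSq_sum_pos hv
      rw [Complex.nonneg_iff] at h1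
      have h3 := h1.1
      simp only [Complex.mul_re, Complex.ofReal_re, Complex.ofReal_im] at h3
      nlinarith [mul_neg_of_neg_of_pos h h2]
    · exact h
  by_cases h1 : v + Jvec v ≠ 0
  · refine ⟨t, v + Jvec v, htpos, h1, ?_, ?_⟩
    · funext p
      simp only [Jvec, Pi.add_apply, star_add, star_star]
      ring
    · rw [mulVec_add, mulVec_Jvec hJ, hvec']
      funext p
      simp only [Jvec, Pi.add_apply, Pi.smul_apply, smul_eq_mul, star_mul',
        Complex.star_def, Complex.conj_ofReal]
      ring
  · push_neg at h1
    refine ⟨t, Complex.I • v, htpos, ?_, ?_, ?_⟩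
    · simp [smul_ne_zero, Complex.I_ne_zero, hv]
    · have hJv : ∀ p : Fin N × Fin N, (starRingEnd ℂ) (v (p.2, p.1)) = -v p := by
        intro p
        have h2 := congrFun h1 p
        simp only [Pi.add_apply, Pi.zero_apply, Jvec, Pi.star_apply, Complex.star_def] at h2
        linear_combination h2
      funext p
      simp only [Jvec, Pi.smul_apply, smul_eq_mul, star_mul', Complex.star_def,
        Complex.conj_I]
      rw [hJv p]
      ring
    · rw [mulVec_smul, hvec', smul_comm]

lemma posSemidef_real_smul {n : Type*} [Fintype n] {M : Matrix n n ℂ} (hM : M.PosSemidef)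
    {r : ℝ} (hr : 0 ≤ r) : ((r : ℂ) • M).PosSemidef := by
  refine Matrix.PosSemidef.of_dotProduct_mulVec_nonneg ?_ ?_
  · rw [Matrix.IsHermitian, conjTranspose_smul, hM.1, Complex.star_def, Complex.conj_ofReal]
  · intro y
    rw [smul_mulVec, dotProduct_smul, smul_eq_mul]
    have h1 : (0 : ℂ) ≤ (r : ℂ) := by
      rw [Complex.nonneg_iff]
      simp [hr]
    exact mul_nonneg h1 (hM.dotProduct_mulVec_nonneg y)

lemma JrealM.sub {C D : Matrix (Fin N × Fin N) (Fin N × Fin N) ℂ}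
    (hC : JrealM C) (hD : JrealM D) : JrealM (C - D) := by
  intro a b c d
  simp only [Matrix.sub_apply, star_sub, hC a b c d, hD a b c d]

lemma JrealM_real_smul {C : Matrix (Fin N × Fin N) (Fin N × Fin N) ℂ} (r : ℝ)
    (hC : JrealM C) : JrealM ((r : ℂ) • C) := by
  intro a b c d
  simp only [Matrix.smul_apply, smul_eq_mul, star_mul', Complex.star_def,
    Complex.conj_ofReal, hC a b c d]

lemma JrealM_vecMulVec {u : Fin N × Fin N → ℂ} (hu : Jvec u = u) :
    JrealM (vecMulVec u (star u)) := by
  intro a b c d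
  have h1 : ∀ p q : Fin N, star (u (p, q)) = u (q, p) := by
    intro p q
    have h2 := congrFun hu (q, p)
    simp only [Jvec] at h2
    exact h2
  simp only [vecMulVec_apply, Pi.star_apply, star_mul', star_star]
  rw [h1 c a, ← h1 b d]

lemma sub_rank_one_posSemidef {n : Type*} [Fintype n] [DecidableEq n]
    {C : Matrix n n ℂ} (hC : C.PosSemidef)
    {lam : ℝ} {u : n → ℂ} (hu : u ≠ 0) (heig : C *ᵥ u = (lam : ℂ) • u) :
    (C - ((lam / (∑ p, Complex.normSq (u p)) : ℝ) : ℂ) • vecMulVec u (star u)).PosSemidef := by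
  set sR : ℝ := ∑ p, Complex.normSq (u p) with hsR
  have hspos : 0 < sR := normSq_sum_pos hu
  set s : ℂ := (sR : ℂ) with hsdef
  have hs : star u ⬝ᵥ u = s := star_dot_self_eq u
  have hs0 : s ≠ 0 := by
    rw [hsdef]
    exact_mod_cast ne_of_gt hspos
  have hstars : star s = s := by rw [hsdef, Complex.star_def, Complex.conj_ofReal]
  refine Matrix.PosSemidef.of_dotProduct_mulVec_nonneg ?_ ?_
  · refine Matrix.IsHermitian.sub hC.1 ?_
    rw [Matrix.IsHermitian, conjTranspose_smul, (posSemidef_vecMulVec_star u).1,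
      Complex.star_def, Complex.conj_ofReal]
  · intro y
    set α : ℂ := (star u ⬝ᵥ y) / s with hα
    set w : n → ℂ := y - α • u with hw
    have hally : y = w + α • u := by rw [hw, sub_add_cancel]
    have hw0 : star u ⬝ᵥ w = 0 := by
      rw [hw, dotProduct_sub, dotProduct_smul, smul_eq_mul, hs, hα, div_mul_cancel₀ _ hs0,
        sub_self]
    have hCy : C *ᵥ y = C *ᵥ w + (α * lam) • u := by
      conv_lhs => rw [hally]
      rw [mulVec_add, mulVec_smul, heig, smul_smul]
    have hysplit : star y = star w + star α • star u := by
      conv_lhs => rw [hally]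
      rw [star_add, star_smul]
    have t1 : star w ⬝ᵥ ((α * lam) • u) = 0 := by
      rw [dotProduct_smul, smul_eq_mul, star_dotProduct, hw0, star_zero, mul_zero]
    have t2 : star u ⬝ᵥ C *ᵥ w = 0 := by
      rw [dotProduct_mulVec]
      have e1 : star u ᵥ* C = ((lam : ℂ) • star u : n → ℂ) := by
        have e2 : star (C *ᵥ u) = star u ᵥ* Cᴴ := star_mulVec C u
        rw [hC.1] at e2
        rw [← e2, heig, star_smul, Complex.star_def, Complex.conj_ofReal]
      rw [e1, smul_dotProduct, hw0, smul_zero]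
    have hyy : star y ⬝ᵥ C *ᵥ y = star w ⬝ᵥ C *ᵥ w + star α * (α * lam) * s := by
      rw [hysplit, hCy, add_dotProduct, dotProduct_add, dotProduct_add, smul_dotProduct,
        smul_dotProduct, t1, t2, dotProduct_smul, hs]
      simp only [smul_eq_mul, smul_zero, add_zero]
      ring
    have hC1y : star y ⬝ᵥ (((lam / sR : ℝ) : ℂ) • vecMulVec u (star u)) *ᵥ y
        = star α * (α * lam) * s := by
      rw [smul_mulVec, vecMulVec_star_mulVec, dotProduct_smul, dotProduct_smul]
      have e3 : star u ⬝ᵥ y = α * s := by rw [hα, div_mul_cancel₀ _ hs0]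
      have e4 : star y ⬝ᵥ u = star α * s := by
        rw [star_dotProduct, e3, star_mul', hstars]
      rw [e3, e4]
      have e5 : ((lam / sR : ℝ) : ℂ) = (lam : ℂ) / s := by
        rw [hsdef]
        push_cast
        ring
      rw [e5]
      field_simp
      linear_combination (s * star α * α * ↑lam) * mul_inv_cancel₀ hs0
    rw [sub_mulVec, dotProduct_sub, hyy, hC1y, add_sub_cancel_right]
    exact hC.dotProduct_mulVec_nonneg w

/-- Two–sided multiplication as a linear map. -/
def sandwich (P Q : Mat N) : Mat N →ₗ[ℂ] Mat N where
  toFun A := P * A * Q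
  map_add' A B := by rw [mul_add, add_mul]
  map_smul' c A := by rw [mul_smul_comm, smul_mul_assoc, RingHom.id_apply]

/-- Conjugation of a map by `σ^a ⋅ σ^a`. -/
def hatA (σ : Mat N) (hσ : σ.PosDef) (a : ℝ) (Φ : Mat N →ₗ[ℂ] Mat N) : Mat N →ₗ[ℂ] Mat N :=
  (sandwich (mpow σ hσ a) (mpow σ hσ a)) ∘ₗ Φ ∘ₗ
    (sandwich (mpow σ hσ (-a)) (mpow σ hσ (-a)))

lemma hatA_apply (σ : Mat N) (hσ : σ.PosDef) (a : ℝ) (Φ : Mat N →ₗ[ℂ] Mat N) (A : Mat N) :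
    hatA σ hσ a Φ A = mpow σ hσ a * Φ (mpow σ hσ (-a) * A * mpow σ hσ (-a)) * mpow σ hσ a :=
  rfl

lemma mpow_sandwich_mpow (σ : Mat N) (hσ : σ.PosDef) (a b : ℝ) (A : Mat N) :
    mpow σ hσ a * (mpow σ hσ b * A * mpow σ hσ b) * mpow σ hσ a
      = mpow σ hσ (a + b) * A * mpow σ hσ (b + a) := by
  simp only [← mul_assoc]
  rw [mpow_mul_mpow, mul_assoc _ (mpow σ hσ b), mpow_mul_mpow]

lemma hatA_hatA (σ : Mat N) (hσ : σ.PosDef) (a b : ℝ) (Φ : Mat N →ₗ[ℂ] Mat N) :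
    hatA σ hσ a (hatA σ hσ b Φ) = hatA σ hσ (a + b) Φ := by
  refine LinearMap.ext fun A => ?_
  simp only [hatA_apply]
  rw [mpow_sandwich_mpow σ hσ (-b) (-a), mpow_sandwich_mpow σ hσ a b]
  rw [show (-b + -a : ℝ) = -(a + b) by ring, show (-a + -b : ℝ) = -(a + b) by ring,
    show (b + a : ℝ) = a + b by ring]

lemma hatA_zero (σ : Mat N) (hσ : σ.PosDef) (Φ : Mat N →ₗ[ℂ] Mat N) :
    hatA σ hσ 0 Φ = Φ := by
  refine LinearMap.ext fun A => ?_
  simp only [hatA_apply, neg_zero, mpow_zero σ hσ, one_mul, mul_one]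

lemma hatA_sub_smul (σ : Mat N) (hσ : σ.PosDef) (a : ℝ) (Φ Ψ : Mat N →ₗ[ℂ] Mat N) (t : ℂ) :
    hatA σ hσ a (Φ - t • Ψ) = hatA σ hσ a Φ - t • hatA σ hσ a Ψ := by
  refine LinearMap.ext fun A => ?_
  simp only [hatA_apply, LinearMap.sub_apply, LinearMap.smul_apply, mul_sub, sub_mul,
    mul_smul_comm, smul_mul_assoc]

lemma hatA_smul (σ : Mat N) (hσ : σ.PosDef) (a : ℝ) (c : ℂ) (Φ : Mat N →ₗ[ℂ] Mat N) :
    hatA σ hσ a (c • Φ) = c • hatA σ hσ a Φ := by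
  refine LinearMap.ext fun A => ?_
  simp only [hatA_apply, LinearMap.smul_apply, mul_smul_comm, smul_mul_assoc]

lemma isCP_hatA (σ : Mat N) (hσ : σ.PosDef) (a : ℝ) {Φ : Mat N →ₗ[ℂ] Mat N}
    (h : IsCP Φ) : IsCP (hatA σ hσ a Φ) := by
  obtain ⟨M, V, hV⟩ := h
  refine ⟨M, fun m => mpow σ hσ (-a) * V m * mpow σ hσ a, fun A => ?_⟩
  rw [hatA_apply, hV, Finset.mul_sum, Finset.sum_mul]
  refine Finset.sum_congr rfl fun m _ => ?_
  simp only [conjTranspose_mul, mpow_conjTranspose, mul_assoc]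

lemma kmsInner_eq (σ : Mat N) (hσ : σ.PosDef) (B X : Mat N) :
    kmsInner σ hσ B X = ((mpow σ hσ (1/4) * B * mpow σ hσ (1/4))ᴴ *
      (mpow σ hσ (1/4) * X * mpow σ hσ (1/4))).trace := by
  have hT : mpow σ hσ (1/4) * mpow σ hσ (1/4) = mpow σ hσ (1/2) := by
    rw [mpow_mul_mpow]
    norm_num
  have h1 : (mpow σ hσ (1/4) * B * mpow σ hσ (1/4))ᴴ
      = mpow σ hσ (1/4) * (Bᴴ * mpow σ hσ (1/4)) := by
    simp only [conjTranspose_mul, mpow_conjTranspose, mul_assoc]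
  rw [h1]
  show (Bᴴ * mpow σ hσ (1/2) * X * mpow σ hσ (1/2)).trace = _
  rw [← hT]
  simp only [mul_assoc]
  conv_rhs => rw [Matrix.trace_mul_comm]
  simp only [mul_assoc]

lemma kms_iff_hs (σ : Mat N) (hσ : σ.PosDef) (Φ : Mat N →ₗ[ℂ] Mat N) :
    IsKMSSelfAdjoint σ hσ Φ ↔ IsHSSelfAdjoint (hatA σ hσ (1/4) Φ) := by
  have hTiT : ∀ A : Mat N, mpow σ hσ (1/4) *
      (mpow σ hσ (-(1/4)) * A * mpow σ hσ (-(1/4))) * mpow σ hσ (1/4) = A := by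
    intro A
    rw [mpow_sandwich_mpow, show ((1/4 : ℝ) + -(1/4)) = 0 by ring,
      show ((-(1/4) : ℝ) + 1/4) = 0 by ring, mpow_zero, one_mul, mul_one]
  have hhat : ∀ A : Mat N, hatA σ hσ (1/4) Φ (mpow σ hσ (1/4) * A * mpow σ hσ (1/4))
      = mpow σ hσ (1/4) * Φ A * mpow σ hσ (1/4) := by
    intro A
    rw [hatA_apply, mpow_sandwich_mpow, show ((-(1/4) : ℝ) + 1/4) = 0 by ring,
      show ((1/4 : ℝ) + -(1/4)) = 0 by ring, mpow_zero, one_mul, mul_one]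
  constructor
  · intro h A B
    have h2 := h (mpow σ hσ (-(1/4)) * A * mpow σ hσ (-(1/4)))
      (mpow σ hσ (-(1/4)) * B * mpow σ hσ (-(1/4)))
    rw [kmsInner_eq, kmsInner_eq, hTiT A, hTiT B] at h2
    simp only [hatA_apply]
    exact h2
  · intro h A B
    rw [kmsInner_eq σ hσ B (Φ A), kmsInner_eq σ hσ (Φ B) A, ← hhat A, ← hhat B]
    exact h (mpow σ hσ (1/4) * A * mpow σ hσ (1/4)) (mpow σ hσ (1/4) * B * mpow σ hσ (1/4))

lemma choi_single_kraus (ρ : ℝ) (hρ : 0 ≤ ρ) (u : Fin N × Fin N → ℂ) :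
    choi (ofKraus (fun _ : Fin 1 =>
      (Matrix.of (fun i k => star (((Real.sqrt ρ : ℂ) • u) (i, k))) : Mat N)))
    = (ρ : ℂ) • vecMulVec u (star u) := by
  have hss : (Real.sqrt ρ : ℂ) * (Real.sqrt ρ : ℂ) = (ρ : ℂ) := by
    rw [← Complex.ofReal_mul, Real.mul_self_sqrt hρ]
  ext ⟨i, k⟩ ⟨j, l⟩
  rw [choi_ofKraus]
  simp only [Fin.sum_univ_one, Matrix.of_apply, star_star, Pi.smul_apply, smul_eq_mul,
    star_mul', Complex.star_def, Complex.conj_ofReal, Complex.conj_conj, Matrix.smul_apply,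
    vecMulVec_apply, Pi.star_apply]
  linear_combination (u (i, k) * (starRingEnd ℂ) (u (j, l))) * hss

end ExtremalAux

open ExtremalAux

/-- A CP map `Φ` on `M_N(ℂ)` that is self-adjoint with respect to the KMS
inner product is extremal in the cone `CP_KMS` if and only if `Φ(A) = Vᴴ A V` for some
`V` with `σ^{-1/2} V σ^{1/2} = Vᴴ`. -/
theorem extremal_CP_KMS_iff (N : ℕ) (hN : 2 ≤ N) (σ : Mat N) (hσ : σ.PosDef)
    (htr : σ.trace = 1) (Φ : Mat N →ₗ[ℂ] Mat N)
    (hΦcp : IsCP Φ) (hΦsa : IsKMSSelfAdjoint σ hσ Φ) :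
    (∀ Ψ : Mat N →ₗ[ℂ] Mat N, IsCP Ψ → IsKMSSelfAdjoint σ hσ Ψ →
        ∀ t : ℝ, 0 < t → IsCP (Φ - (t : ℂ) • Ψ) → ∃ c : ℝ, 0 ≤ c ∧ Ψ = (c : ℂ) • Φ) ↔
      ∃ V : Mat N, mpow σ hσ (-(1/2)) * V * mpow σ hσ (1/2) = Vᴴ ∧
        ∀ A, Φ A = Vᴴ * A * V := by
  constructor
  · intro hext
    have hcph : IsCP (hatA σ hσ (1/4) Φ) := isCP_hatA σ hσ (1/4) hΦcp
    have hhs : IsHSSelfAdjoint (hatA σ hσ (1/4) Φ) := (kms_iff_hs σ hσ Φ).mp hΦsa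
    have hJ : JrealM (choi (hatA σ hσ (1/4) Φ)) := (isHS_iff_Jreal _).mp hhs
    have hCpsd := posSemidef_choi_of_isCP hcph
    have hunhat : hatA σ hσ (-(1/4)) (hatA σ hσ (1/4) Φ) = Φ := by
      rw [hatA_hatA, show (-(1/4) + (1/4) : ℝ) = 0 by ring, hatA_zero]
    by_cases hC0 : choi (hatA σ hσ (1/4) Φ) = 0
    · refine ⟨0, ?_, fun A => ?_⟩
      · simp
      · have hΦh0 : hatA σ hσ (1/4) Φ = 0 := by
          apply eq_of_choi_eq
          rw [hC0]
          ext ⟨i, k⟩ ⟨j, l⟩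
          simp [choi]
        have hΦ0 : Φ = 0 := by
          rw [← hunhat, hΦh0]
          refine LinearMap.ext fun A => ?_
          simp [hatA_apply]
        rw [hΦ0]
        simp
    · obtain ⟨lam, u, hlam, hu, hJu, heig⟩ := exists_Jreal_eigvec hCpsd hJ hC0
      have hspos : 0 < ∑ p, Complex.normSq (u p) := normSq_sum_pos hu
      have hrpos : 0 < lam / ∑ p, Complex.normSq (u p) := div_pos hlam hspos
      set r : ℝ := lam / ∑ p, Complex.normSq (u p) with hrdef
      set Ψh := ofKraus (fun _ : Fin 1 =>
        (Matrix.of (fun i k => star (((Real.sqrt r : ℂ) • u) (i, k))) : Mat N)) with hΨh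
      have hchoiΨh : choi Ψh = (r : ℂ) • vecMulVec u (star u) := choi_single_kraus r hrpos.le u
      set Ψ := hatA σ hσ (-(1/4)) Ψh with hΨdef
      have hhatΨ : hatA σ hσ (1/4) Ψ = Ψh := by
        rw [hΨdef, hatA_hatA, show ((1/4 : ℝ) + -(1/4)) = 0 by ring, hatA_zero]
      have hΨcp : IsCP Ψ := isCP_hatA σ hσ _ (isCP_ofKraus _)
      have hΨsa : IsKMSSelfAdjoint σ hσ Ψ := by
        refine (kms_iff_hs σ hσ Ψ).mpr ?_
        rw [hhatΨ]
        refine (isHS_iff_Jreal Ψh).mpr ?_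
        rw [hchoiΨh]
        exact JrealM_real_smul r (JrealM_vecMulVec hJu)
      have hdiffcp : IsCP (Φ - ((1 : ℝ) : ℂ) • Ψ) := by
        have h2 : (choi (hatA σ hσ (1/4) (Φ - ((1 : ℝ) : ℂ) • Ψ))).PosSemidef := by
          rw [hatA_sub_smul, hhatΨ, choi_sub_smul, hchoiΨh, Complex.ofReal_one, one_smul]
          exact sub_rank_one_posSemidef hCpsd hu heig
        have h3 : IsCP (hatA σ hσ (1/4) (Φ - ((1 : ℝ) : ℂ) • Ψ)) := isCP_of_posSemidef_choi h2
        have h4 := isCP_hatA σ hσ (-(1/4)) h3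
        rwa [hatA_hatA, show (-(1/4) + (1/4) : ℝ) = 0 by ring, hatA_zero] at h4
      obtain ⟨c, hc0, hΨeq⟩ := hext Ψ hΨcp hΨsa 1 one_pos hdiffcp
      have hC1C : (r : ℂ) • vecMulVec u (star u) = (c : ℂ) • choi (hatA σ hσ (1/4) Φ) := by
        calc (r : ℂ) • vecMulVec u (star u) = choi Ψh := hchoiΨh.symm
          _ = choi (hatA σ hσ (1/4) Ψ) := by rw [hhatΨ]
          _ = choi ((c : ℂ) • hatA σ hσ (1/4) Φ) := by rw [hΨeq, hatA_smul]
          _ = (c : ℂ) • choi (hatA σ hσ (1/4) Φ) := choi_smul _ _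
      have hc_ne : c ≠ 0 := by
        intro h0
        rw [h0, Complex.ofReal_zero, zero_smul] at hC1C
        obtain ⟨p, hp⟩ := Function.ne_iff.mp hu
        have h5 := congrFun (congrFun hC1C p) p
        simp only [Matrix.smul_apply, vecMulVec_apply, Pi.star_apply, Matrix.zero_apply,
          smul_eq_mul] at h5
        have hr0 : (r : ℂ) ≠ 0 := by exact_mod_cast ne_of_gt hrpos
        exact (mul_ne_zero hr0 (mul_ne_zero hp (star_ne_zero.mpr hp))) h5
      have hcpos : 0 < c := lt_of_le_of_ne hc0 (Ne.symm hc_ne)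
      have hμpos : 0 < r / c := div_pos hrpos hcpos
      have hCeq : choi (hatA σ hσ (1/4) Φ) = ((r / c : ℝ) : ℂ) • vecMulVec u (star u) := by
        have hcC : (c : ℂ) ≠ 0 := by exact_mod_cast hc_ne
        have h7 : choi (hatA σ hσ (1/4) Φ)
            = (c : ℂ)⁻¹ • ((r : ℂ) • vecMulVec u (star u)) := by
          rw [hC1C, smul_smul, inv_mul_cancel₀ hcC, one_smul]
        rw [h7, smul_smul]
        congr 1
        push_cast
        field_simp
      set Wμ : Mat N := Matrix.of (fun i k => star (((Real.sqrt (r / c) : ℂ) • u) (i, k)))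
        with hWμ
      have hΦhK : hatA σ hσ (1/4) Φ = ofKraus (fun _ : Fin 1 => Wμ) := by
        apply eq_of_choi_eq
        rw [hCeq, choi_single_kraus (r / c) hμpos.le u]
      have hJu' : ∀ p q : Fin N, star (u (p, q)) = u (q, p) := by
        intro p q
        have h2 := congrFun hJu (q, p)
        simp only [Jvec] at h2
        exact h2
      have hstarsqrt : star ((Real.sqrt (r / c) : ℝ) : ℂ) = ((Real.sqrt (r / c) : ℝ) : ℂ) := by
        rw [Complex.star_def, Complex.conj_ofReal]
      have hWherm : Wμᴴ = Wμ := by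
        ext i k
        show star (Wμ k i) = Wμ i k
        rw [hWμ]
        simp only [Matrix.of_apply, Pi.smul_apply, smul_eq_mul, star_star, star_mul',
          hstarsqrt]
        rw [← hJu' i k]
      refine ⟨mpow σ hσ (1/4) * Wμ * mpow σ hσ (-(1/4)), ?_, ?_⟩
      · have e1 : mpow σ hσ (-(1/2)) * mpow σ hσ (1/4) = mpow σ hσ (-(1/4)) := by
          rw [mpow_mul_mpow]
          norm_num
        have e2 : mpow σ hσ (-(1/4)) * mpow σ hσ (1/2) = mpow σ hσ (1/4) := by
          rw [mpow_mul_mpow]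
          norm_num
        have e3 : (mpow σ hσ (1/4) * Wμ * mpow σ hσ (-(1/4)))ᴴ
            = mpow σ hσ (-(1/4)) * (Wμ * mpow σ hσ (1/4)) := by
          simp only [conjTranspose_mul, mpow_conjTranspose, hWherm, mul_assoc]
        rw [e3]
        simp only [← mul_assoc]
        rw [e1, mul_assoc _ (mpow σ hσ (-(1/4))) (mpow σ hσ (1/2)), e2, mul_assoc]
      · intro A
        have h6 : Φ A = mpow σ hσ (-(1/4)) * (hatA σ hσ (1/4) Φ)
            (mpow σ hσ (1/4) * A * mpow σ hσ (1/4)) * mpow σ hσ (-(1/4)) := by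
          conv_lhs => rw [← hunhat]
          rw [hatA_apply, show (-(-(1/4)) : ℝ) = (1/4 : ℝ) by norm_num]
        rw [h6, hΦhK]
        have h7 : (ofKraus (fun _ : Fin 1 => Wμ)) (mpow σ hσ (1/4) * A * mpow σ hσ (1/4))
            = Wμᴴ * (mpow σ hσ (1/4) * A * mpow σ hσ (1/4)) * Wμ := by
          show (∑ _m : Fin 1, _) = _
          rw [Fin.sum_univ_one]
        rw [h7, hWherm]
        have h8 : (mpow σ hσ (1/4) * Wμ * mpow σ hσ (-(1/4)))ᴴ
            = mpow σ hσ (-(1/4)) * (Wμ * mpow σ hσ (1/4)) := by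
          simp only [conjTranspose_mul, mpow_conjTranspose, hWherm, mul_assoc]
        rw [h8]
        simp only [mul_assoc]
  · rintro ⟨V, _hVcond, hVrep⟩ Ψ hΨcp _hΨsa t ht hsub
    have hΦK : Φ = ofKraus (fun _ : Fin 1 => V) := by
      refine LinearMap.ext fun A => ?_
      rw [hVrep]
      show _ = ∑ _m : Fin 1, Vᴴ * A * V
      rw [Fin.sum_univ_one]
    have hchoiΦ : choi Φ = vecMulVec (fun p : Fin N × Fin N => star (V p.1 p.2))
        (star fun p : Fin N × Fin N => star (V p.1 p.2)) := by
      ext ⟨i, k⟩ ⟨j, l⟩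
      rw [hΦK, choi_ofKraus]
      simp [vecMulVec_apply]
    have hψpsd : ((t : ℂ) • choi Ψ).PosSemidef :=
      posSemidef_real_smul (posSemidef_choi_of_isCP hΨcp) ht.le
    have hle : (vecMulVec (fun p : Fin N × Fin N => star (V p.1 p.2))
        (star fun p : Fin N × Fin N => star (V p.1 p.2)) - (t : ℂ) • choi Ψ).PosSemidef := by
      have h1 := posSemidef_choi_of_isCP hsub
      rw [choi_sub_smul, hchoiΦ] at h1
      exact h1
    obtain ⟨μ, hμ0, hμeq⟩ := dominated_by_rank_one _ hψpsd hle
    refine ⟨μ / t, div_nonneg hμ0 ht.le, ?_⟩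
    apply eq_of_choi_eq
    rw [choi_smul]
    have ht0 : (t : ℂ) ≠ 0 := by exact_mod_cast ne_of_gt ht
    calc choi Ψ = (t : ℂ)⁻¹ • ((t : ℂ) • choi Ψ) := by
          rw [smul_smul, inv_mul_cancel₀ ht0, one_smul]
      _ = (t : ℂ)⁻¹ • ((μ : ℂ) • vecMulVec (fun p : Fin N × Fin N => star (V p.1 p.2))
            (star fun p : Fin N × Fin N => star (V p.1 p.2))) := by rw [hμeq]
      _ = ((μ / t : ℝ) : ℂ) • choi Φ := by
          rw [hchoiΦ, smul_smul]
          congr 1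
          push_cast
          rw [div_eq_mul_inv]
          ring
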